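/- For a UHF Bratteli diagram over a discrete group G (one vertex at each level, E(n) = G_n a finite subset of G), with constant transition probabilities p_n = (1−t)δ_0 + tδ_1 on G = ℤ with G_n = {0,1}: every bounded harmonic sequence for the skew-product (kernel) diagram with initial measure δ_0 is constant. Concretely: if h_n : {0,…,n} → ℂ is bounded uniformly in n and satisfies h_{n-1}(k) = (1−t)h_n(k) + t·h_n(k+1) for all 0 ≤ k ≤ n−1, n ≥ 1, then h_n(k) = h_0(0) for all n and all 0 ≤ k ≤ n. -/

import Mathlib

open Finset

noncomputable def binw (t : ℝ) (m i : ℕ) : ℝ :=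
  if i ≤ m then (m.choose i : ℝ) * t^i * (1-t)^(m-i) else 0

noncomputable def binwPrev (t : ℝ) (m i : ℕ) : ℝ :=
  match i with
  | 0 => 0
  | (j+1) => binw t m j

lemma binw_zero (t : ℝ) (m : ℕ) : binw t m 0 = (1-t)^m := by
  simp [binw]

lemma binw_of_gt (t : ℝ) {m i : ℕ} (h : m < i) : binw t m i = 0 := by
  simp [binw, Nat.not_le.mpr h]

lemma binw_nonneg {t : ℝ} (ht0 : 0 ≤ t) (ht1 : t ≤ 1) (m i : ℕ) : 0 ≤ binw t m i := by
  unfold binw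
  split
  · have h1 : (0:ℝ) ≤ 1 - t := by linarith
    positivity
  · exact le_refl 0

lemma binw_succ_zero (t : ℝ) (m : ℕ) : binw t (m+1) 0 = (1-t) * binw t m 0 := by
  simp [binw_zero, pow_succ]; ring

lemma binw_succ_succ (t : ℝ) (m i : ℕ) :
    binw t (m+1) (i+1) = (1-t) * binw t m (i+1) + t * binw t m i := by
  rcases lt_trichotomy (i+1) (m+1) with hlt | heq | hgt
  · have hi1 : i + 1 ≤ m := Nat.lt_succ_iff.mp hlt
    have hi : i ≤ m := le_trans (Nat.le_succ i) hi1
    have hsub : m - i = (m - (i+1)) + 1 := by omega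
    have hsub2 : m + 1 - (i + 1) = m - i := by omega
    rw [binw, binw, binw, if_pos (by omega : i + 1 ≤ m + 1), if_pos hi1, if_pos hi,
      hsub2, hsub, Nat.choose_succ_succ m i]
    push_cast
    ring
  · have hi : i = m := by omega
    subst hi
    simp [binw, Nat.not_le.mpr (Nat.lt_succ_self i), pow_succ]
    ring
  · have h1 : m < i := by omega
    rw [binw_of_gt t (by omega : m + 1 < i + 1), binw_of_gt t (by omega : m < i + 1),
      binw_of_gt t h1]
    ring

lemma sum_binw (t : ℝ) (m : ℕ) : ∑ i ∈ range (m+1), binw t m i = 1 := by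
  have h := add_pow t (1-t) m
  have h2 : ∑ i ∈ range (m+1), binw t m i = (t + (1-t))^m := by
    rw [h]
    refine sum_congr rfl fun i hi => ?_
    have : i ≤ m := Nat.lt_succ_iff.mp (mem_range.mp hi)
    simp [binw, this]
    ring
  rw [h2]
  norm_num

lemma var_binw (t : ℝ) (m : ℕ) :
    ∑ i ∈ range (m+1), binw t m i * ((i:ℝ) - m*t)^2 = m*t*(1-t) := by
  induction m with
  | zero => simp [binw_zero]
  | succ m ih =>
    have peel : ∑ i ∈ range (m+2), binw t (m+1) i * ((i:ℝ) - (m+1)*t)^2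
        = (∑ j ∈ range (m+1), binw t (m+1) (j+1) * (((j:ℝ)+1) - (m+1)*t)^2)
          + binw t (m+1) 0 * ((0:ℝ) - (m+1)*t)^2 := by
      rw [Finset.sum_range_succ' (fun i => binw t (m+1) i * ((i:ℝ) - (m+1)*t)^2) (m+1)]
      push_cast
      ring
    push_cast at peel ⊢
    rw [peel]
    have hrec : ∀ j ∈ range (m+1), binw t (m+1) (j+1) * (((j:ℝ)+1) - ((m:ℝ)+1)*t)^2
        = (1-t) * (binw t m (j+1) * (((j:ℝ)+1) - ((m:ℝ)+1)*t)^2)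
          + t * (binw t m j * (((j:ℝ)+1) - ((m:ℝ)+1)*t)^2) := by
      intro j _
      rw [binw_succ_succ]
      ring
    rw [Finset.sum_congr rfl hrec, Finset.sum_add_distrib, ← Finset.mul_sum, ← Finset.mul_sum,
      binw_succ_zero]
    have shift : (∑ j ∈ range (m+1), binw t m (j+1) * (((j:ℝ)+1) - ((m:ℝ)+1)*t)^2)
        = (∑ i ∈ range (m+1), binw t m i * ((i:ℝ) - ((m:ℝ)+1)*t)^2)
          - binw t m 0 * ((0:ℝ) - ((m:ℝ)+1)*t)^2 := by
      have expand : ∑ i ∈ range (m+2), binw t m i * ((i:ℝ) - ((m:ℝ)+1)*t)^2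
          = (∑ j ∈ range (m+1), binw t m (j+1) * (((j:ℝ)+1) - ((m:ℝ)+1)*t)^2)
            + binw t m 0 * ((0:ℝ) - ((m:ℝ)+1)*t)^2 := by
        rw [Finset.sum_range_succ' (fun i => binw t m i * ((i:ℝ) - ((m:ℝ)+1)*t)^2) (m+1)]
        push_cast; ring
      have drop : ∑ i ∈ range (m+2), binw t m i * ((i:ℝ) - ((m:ℝ)+1)*t)^2
          = ∑ i ∈ range (m+1), binw t m i * ((i:ℝ) - ((m:ℝ)+1)*t)^2 := by
        rw [Finset.sum_range_succ, binw_of_gt t (Nat.lt_succ_self m)]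
        ring
      rw [← drop, expand]; ring
    rw [shift, binw_zero]
    have comb : (1-t) * ((∑ i ∈ range (m+1), binw t m i * ((i:ℝ) - ((m:ℝ)+1)*t)^2))
        + t * (∑ j ∈ range (m+1), binw t m j * (((j:ℝ)+1) - ((m:ℝ)+1)*t)^2)
        = ∑ i ∈ range (m+1), (binw t m i * ((i:ℝ) - (m:ℝ)*t)^2 + binw t m i * (t*(1-t))) := by
      rw [Finset.mul_sum, Finset.mul_sum, ← Finset.sum_add_distrib]
      refine sum_congr rfl fun i _ => ?_
      ring
    have final : ∑ i ∈ range (m+1), (binw t m i * ((i:ℝ) - (m:ℝ)*t)^2 + binw t m i * (t*(1-t)))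
        = (m:ℝ)*t*(1-t) + t*(1-t) := by
      rw [Finset.sum_add_distrib, ih, ← Finset.sum_mul, sum_binw]
      ring
    rw [final] at comb
    nlinarith [comb]

lemma binw_key (t : ℝ) (m i : ℕ) :
    binw t (m+1) i * ((i:ℝ) - ((m:ℝ)+1)*t)
      = ((m:ℝ)+1)*t*(1-t) * (binwPrev t m i - binw t m i) := by
  match i with
  | 0 =>
    simp only [binwPrev, binw_zero, Nat.cast_zero]
    ring
  | (j+1) =>
    simp only [binwPrev]
    rcases lt_trichotomy (j+1) (m+1) with hlt | heq | hgt
    · have hj1 : j + 1 ≤ m := Nat.lt_succ_iff.mp hlt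
      have hj : j ≤ m := le_trans (Nat.le_succ j) hj1
      have hsub : m - j = (m - (j+1)) + 1 := by omega
      have hsub2 : m + 1 - (j + 1) = m - j := by omega
      have h2 : (m+1) * m.choose j = (m+1).choose (j+1) * (j+1) := Nat.add_one_mul_choose_eq m j
      have hR : ((j:ℝ)+1) * ((m+1).choose (j+1) : ℝ) = ((m:ℝ)+1) * (m.choose j : ℝ) := by
        have h3 := congrArg (Nat.cast : ℕ → ℝ) h2
        push_cast at h3
        linarith
      have hP : ((m+1).choose (j+1) : ℝ) = (m.choose j : ℝ) + (m.choose (j+1) : ℝ) := by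
        rw [Nat.choose_succ_succ m j]
        push_cast
        ring
      rw [binw, binw, binw, if_pos (by omega : j + 1 ≤ m + 1), if_pos hj1, if_pos hj,
        hsub2, hsub]
      rw [hP] at hR
      rw [hP]
      push_cast
      linear_combination (t^(j+1) * (1-t)^(m-(j+1)+1)) * hR
    · have hj : j = m := by omega
      subst hj
      rw [binw, if_pos (le_refl (j+1)), binw_of_gt t (Nat.lt_succ_self j), binw,
        if_pos (le_refl j)]
      simp
      ring
    · rw [binw_of_gt t (by omega : m + 1 < j + 1), binw_of_gt t (by omega : m < j),
        binw_of_gt t (by omega : m < j + 1)]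
      ring

lemma conv_step (t : ℝ) (m : ℕ) (f : ℕ → ℂ) :
    ∑ j ∈ range (m+2), (binw t (m+1) j : ℂ) * f j
      = ∑ j ∈ range (m+1), (binw t m j : ℂ) * ((1-t:ℂ) * f j + (t:ℂ) * f (j+1)) := by
  have e1 := Finset.sum_range_succ' (fun j => (binw t (m+1) j : ℂ) * f j) (m+1)
  have e2 := Finset.sum_range_succ' (fun j => (binw t m j : ℂ) * f j) (m+1)
  have e3 : ∑ j ∈ range (m+2), (binw t m j : ℂ) * f j
      = ∑ j ∈ range (m+1), (binw t m j : ℂ) * f j := by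
    rw [Finset.sum_range_succ, binw_of_gt t (Nat.lt_succ_self m)]
    simp
  rw [e1]
  have e4 : ∀ j ∈ range (m+1), (binw t (m+1) (j+1) : ℂ) * f (j+1)
      = (1-t:ℂ) * ((binw t m (j+1) : ℂ) * f (j+1)) + (t:ℂ) * ((binw t m j : ℂ) * f (j+1)) := by
    intro j _
    rw [binw_succ_succ]
    push_cast
    ring
  rw [sum_congr rfl e4, Finset.sum_add_distrib, ← Finset.mul_sum, ← Finset.mul_sum,
    binw_succ_zero]
  have e5 : ∀ j ∈ range (m+1), (binw t m j : ℂ) * ((1-t:ℂ) * f j + (t:ℂ) * f (j+1))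
      = (1-t:ℂ) * ((binw t m j : ℂ) * f j) + (t:ℂ) * ((binw t m j : ℂ) * f (j+1)) := by
    intro j _
    ring
  rw [sum_congr rfl e5, Finset.sum_add_distrib, ← Finset.mul_sum, ← Finset.mul_sum,
    ← e3, e2]
  push_cast
  ring

lemma rep (t : ℝ) (h : ℕ → ℕ → ℂ)
    (hharm : ∀ n k, k ≤ n →
      h n k = (1 - t : ℂ) * h (n+1) k + (t : ℂ) * h (n+1) (k+1))
    (m : ℕ) : ∀ n k, k ≤ n →
    h n k = ∑ j ∈ range (m+1), (binw t m j : ℂ) * h (n+m) (k+j) := by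
  induction m with
  | zero =>
    intro n k hk
    simp [binw]
  | succ m ih =>
    intro n k hk
    have hc := conv_step t m (fun j => h (n+(m+1)) (k+j))
    simp only [← Nat.add_assoc] at hc ⊢
    have h2 : m + 1 + 1 = m + 2 := rfl
    rw [h2, hc, ih n k hk]
    refine sum_congr rfl fun j hj => ?_
    rw [hharm (n+m) (k+j) (by have := mem_range.mp hj; omega)]

lemma diff_rep (t : ℝ) (h : ℕ → ℕ → ℂ)
    (hharm : ∀ n k, k ≤ n →
      h n k = (1 - t : ℂ) * h (n+1) k + (t : ℂ) * h (n+1) (k+1))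
    (m n k : ℕ) (hk : k + 1 ≤ n) :
    h n (k+1) - h n k
      = ∑ i ∈ range (m+2), ((binwPrev t m i - binw t m i : ℝ) : ℂ) * h (n+m) (k+i) := by
  have r1 := rep t h hharm m n (k+1) hk
  have r2 := rep t h hharm m n k (le_trans (Nat.le_succ k) hk)
  have r2' : h n k = ∑ i ∈ range (m+2), (binw t m i : ℂ) * h (n+m) (k+i) := by
    rw [Finset.sum_range_succ, binw_of_gt t (Nat.lt_succ_self m)]
    push_cast
    rw [r2]
    ring
  have r1' : h n (k+1) = ∑ i ∈ range (m+2), ((binwPrev t m i : ℝ) : ℂ) * h (n+m) (k+i) := by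
    rw [Finset.sum_range_succ' (fun i => ((binwPrev t m i : ℝ):ℂ) * h (n+m) (k+i)) (m+1)]
    simp only [binwPrev]
    rw [r1]
    have harith : ∀ j : ℕ, k + 1 + j = k + (j+1) := fun j => by omega
    simp only [harith]
    push_cast
    ring
  rw [r1', r2', ← Finset.sum_sub_distrib]
  refine sum_congr rfl fun i _ => ?_
  push_cast
  ring

lemma l1_bound {t : ℝ} (ht0 : 0 < t) (ht1 : t < 1) (m : ℕ) :
    ∑ i ∈ range (m+2), |binwPrev t m i - binw t m i|
      ≤ 1 / Real.sqrt (((m:ℝ)+1)*t*(1-t)) := by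
  have ht1' : (0:ℝ) < 1 - t := by linarith
  set M : ℝ := ((m:ℝ)+1)*t*(1-t) with hM
  have hMpos : 0 < M := by positivity
  have key : ∀ i ∈ range (m+2), |binwPrev t m i - binw t m i|
      = binw t (m+1) i * |(i:ℝ) - ((m:ℝ)+1)*t| / M := by
    intro i _
    have hk := binw_key t m i
    have hd : binwPrev t m i - binw t m i = binw t (m+1) i * ((i:ℝ) - ((m:ℝ)+1)*t) / M := by
      rw [eq_div_iff hMpos.ne', hM]
      linarith [hk]
    rw [hd, abs_div, abs_of_pos hMpos, abs_mul,
      abs_of_nonneg (binw_nonneg ht0.le ht1.le (m+1) i)]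
  rw [sum_congr rfl key, ← Finset.sum_div]
  have cs : ∑ i ∈ range (m+2), binw t (m+1) i * |(i:ℝ) - ((m:ℝ)+1)*t| ≤ Real.sqrt M := by
    have h1 := Real.sum_mul_le_sqrt_mul_sqrt (range (m+2))
      (fun i => Real.sqrt (binw t (m+1) i))
      (fun i => Real.sqrt (binw t (m+1) i) * |(i:ℝ) - ((m:ℝ)+1)*t|)
    have e1 : ∀ i ∈ range (m+2),
        Real.sqrt (binw t (m+1) i) * (Real.sqrt (binw t (m+1) i) * |(i:ℝ) - ((m:ℝ)+1)*t|)
        = binw t (m+1) i * |(i:ℝ) - ((m:ℝ)+1)*t| := by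
      intro i _
      rw [← mul_assoc, Real.mul_self_sqrt (binw_nonneg ht0.le ht1.le (m+1) i)]
    have e2 : ∀ i ∈ range (m+2), (Real.sqrt (binw t (m+1) i))^2 = binw t (m+1) i := by
      intro i _
      exact Real.sq_sqrt (binw_nonneg ht0.le ht1.le (m+1) i)
    have e3 : ∀ i ∈ range (m+2),
        (Real.sqrt (binw t (m+1) i) * |(i:ℝ) - ((m:ℝ)+1)*t|)^2
        = binw t (m+1) i * ((i:ℝ) - ((m:ℝ)+1)*t)^2 := by
      intro i _
      rw [mul_pow, Real.sq_sqrt (binw_nonneg ht0.le ht1.le (m+1) i), sq_abs]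
    rw [sum_congr rfl e1, sum_congr rfl e2, sum_congr rfl e3] at h1
    have hsum : ∑ i ∈ range (m+2), binw t (m+1) i = 1 := sum_binw t (m+1)
    have hvar : ∑ i ∈ range (m+2), binw t (m+1) i * ((i:ℝ) - ((m:ℝ)+1)*t)^2 = M := by
      have := var_binw t (m+1)
      push_cast at this
      exact this
    rw [hsum, hvar] at h1
    simpa using h1
  have hfin : Real.sqrt M / M = 1 / Real.sqrt M := by
    have hs := Real.mul_self_sqrt hMpos.le
    have hsp : 0 < Real.sqrt M := Real.sqrt_pos.mpr hMpos
    field_simp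
    exact Real.sq_sqrt hMpos.le
  calc (∑ i ∈ range (m+2), binw t (m+1) i * |(i:ℝ) - ((m:ℝ)+1)*t|) / M
      ≤ Real.sqrt M / M := by gcongr
    _ = 1 / Real.sqrt M := hfin

/-- Triviality of the tail boundary of the time-dependent Bernoulli random walk
on `ℤ` (Pascal triangle): every bounded harmonic sequence
`h_{n}(k) = (1-t)h_{n+1}(k) + t·h_{n+1}(k+1)` (for `0 < t < 1`) is constant. -/
theorem stmt16 (t : ℝ) (ht0 : 0 < t) (ht1 : t < 1)
    (h : ℕ → ℕ → ℂ) (C : ℝ)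
    (hbdd : ∀ n k, k ≤ n → ‖h n k‖ ≤ C)
    (hharm : ∀ n k, k ≤ n →
      h n k = (1 - t : ℂ) * h (n+1) k + (t : ℂ) * h (n+1) (k+1)) :
    ∀ n k, k ≤ n → h n k = h 0 0 := by
  have ht1' : (0:ℝ) < 1 - t := by linarith
  have hC0 : 0 ≤ C := le_trans (norm_nonneg _) (hbdd 0 0 (le_refl 0))
  have hdiff : ∀ n k, k + 1 ≤ n → h n (k+1) = h n k := by
    intro n k hk
    have key : ∀ m : ℕ, ‖h n (k+1) - h n k‖
        ≤ C / Real.sqrt (((m:ℝ)+1)*t*(1-t)) := by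
      intro m
      rw [diff_rep t h hharm m n k hk]
      calc ‖∑ i ∈ range (m+2),
              ((binwPrev t m i - binw t m i : ℝ) : ℂ) * h (n+m) (k+i)‖
          ≤ ∑ i ∈ range (m+2),
              ‖((binwPrev t m i - binw t m i : ℝ) : ℂ) * h (n+m) (k+i)‖ :=
            norm_sum_le _ _
        _ ≤ ∑ i ∈ range (m+2), |binwPrev t m i - binw t m i| * C := by
            refine Finset.sum_le_sum fun i hi => ?_
            rw [norm_mul, Complex.norm_real, Real.norm_eq_abs]
            exact mul_le_mul_of_nonneg_left
              (hbdd (n+m) (k+i) (by have := mem_range.mp hi; omega)) (abs_nonneg _)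
        _ = (∑ i ∈ range (m+2), |binwPrev t m i - binw t m i|) * C := by
            rw [Finset.sum_mul]
        _ ≤ (1 / Real.sqrt (((m:ℝ)+1)*t*(1-t))) * C :=
            mul_le_mul_of_nonneg_right (l1_bound ht0 ht1 m) hC0
        _ = C / Real.sqrt (((m:ℝ)+1)*t*(1-t)) := by ring
    have hten : Filter.Tendsto (fun m : ℕ => C / Real.sqrt (((m:ℝ)+1)*t*(1-t)))
        Filter.atTop (nhds 0) := by
      apply Filter.Tendsto.div_atTop (tendsto_const_nhds)
      have hsq : Filter.Tendsto Real.sqrt Filter.atTop Filter.atTop := by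
        apply Filter.tendsto_atTop_atTop_of_monotone
          (fun a b hab => Real.sqrt_le_sqrt hab)
        intro b
        exact ⟨b^2, by rw [Real.sqrt_sq_eq_abs]; exact le_abs_self b⟩
      apply Filter.Tendsto.comp hsq
      have h1 : Filter.Tendsto (fun m : ℕ => ((m:ℝ)+1)) Filter.atTop Filter.atTop :=
        Filter.tendsto_atTop_add_const_right _ 1 tendsto_natCast_atTop_atTop
      have h2 := Filter.Tendsto.atTop_mul_const (by positivity : (0:ℝ) < t*(1-t)) h1
      simpa [mul_assoc] using h2
    have h0 : ‖h n (k+1) - h n k‖ ≤ 0 := ge_of_tendsto' hten key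
    have h1 : ‖h n (k+1) - h n k‖ = 0 :=
      le_antisymm h0 (norm_nonneg _)
    have h2 : h n (k+1) - h n k = 0 := by
      exact norm_eq_zero.mp h1
    linear_combination h2
  have hrow : ∀ n k, k ≤ n → h n k = h n 0 := by
    intro n k
    induction k with
    | zero => intro _; rfl
    | succ k ih =>
      intro hk
      rw [hdiff n k hk, ih (by omega)]
  have hcol : ∀ n, h n 0 = h 0 0 := by
    intro n
    induction n with
    | zero => rfl
    | succ n ih =>
      have hh := hharm n 0 (Nat.zero_le n)
      rw [hdiff (n+1) 0 (by omega)] at hh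
      have : h (n+1) 0 = h n 0 := by
        rw [hh]
        ring
      rw [this, ih]
  intro n k hk
  rw [hrow n k hk, hcol n]
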